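/- Let k ≥ 1 and n > 2k be integers. There exists a constant C = C(n, k) > 0 such that for all real numbers 0 < δ < 1, all 0 < μ₁ ≤ δ and 0 < μ₂ ≤ δ, and every Θ ∈ ℝⁿ, one has ∫_{B(0, 2δ)} μ₁^{(n−2k)/2} (μ₁ + |x|)^{4−n} · μ₂^{(n−2k)/2} (μ₂² + |x − Θ|²)^{(2k−n)/2} dx ≤ C · (μ₁μ₂/(μ₁² + |Θ|²))^{(n−2k)/2} · (μ₁⁴ + δ⁴). -/

import Mathlib

set_option maxHeartbeats 1000000

open MeasureTheory Real

namespace Stmt8Aux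

open Metric Set

open Metric Set

/-- Key radial estimate: `∫_{B(0,R)} ‖y-c‖^{-t} ≤ K R^{n-t}` for `0 < t < n`,
uniformly in the center `c`. -/
lemma rad8 (n : ℕ) (hn : 0 < n) (t : ℝ) (ht0 : 0 < t) (htn : t < n) :
    ∃ K : ℝ, 0 < K ∧ ∀ R : ℝ, 0 < R → ∀ c : EuclideanSpace ℝ (Fin n),
      ∫⁻ y in Metric.ball (0 : EuclideanSpace ℝ (Fin n)) R,
        ENNReal.ofReal (‖y - c‖ ^ (-t)) ≤ ENNReal.ofReal (K * R ^ ((n : ℝ) - t)) := by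
  haveI : Nonempty (Fin n) := ⟨⟨0, hn⟩⟩
  have hfr : (Module.finrank ℝ (EuclideanSpace ℝ (Fin n))) = n := finrank_euclideanSpace_fin
  set v : ℝ := (volume (Metric.ball (0 : EuclideanSpace ℝ (Fin n)) 1)).toReal with hv
  have hvlt : volume (Metric.ball (0 : EuclideanSpace ℝ (Fin n)) 1) < ⊤ := measure_ball_lt_top
  have hvE : volume (Metric.ball (0 : EuclideanSpace ℝ (Fin n)) 1) = ENNReal.ofReal v :=
    (ENNReal.ofReal_toReal hvlt.ne).symm
  have hv0 : 0 < v := by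
    apply ENNReal.toReal_pos _ hvlt.ne
    exact (measure_ball_pos volume 0 one_pos).ne'
  have hnt : 0 < (n : ℝ) - t := by linarith
  refine ⟨v * (1 + t / ((n : ℝ) - t)), by positivity, fun R hR c => ?_⟩
  set μR := volume.restrict (Metric.ball (0 : EuclideanSpace ℝ (Fin n)) R) with hμR
  have h_nn : (0 : EuclideanSpace ℝ (Fin n) → ℝ) ≤ᵐ[μR] fun y => ‖y - c‖ ^ (-t) :=
    Filter.Eventually.of_forall fun y => by positivity
  have h_m : AEMeasurable (fun y : EuclideanSpace ℝ (Fin n) => ‖y - c‖ ^ (-t)) μR := by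
    apply Measurable.aemeasurable; fun_prop
  rw [lintegral_eq_lintegral_meas_le μR h_nn h_m]
  have hball : ∀ s : ℝ, 0 < s →
      μR {y : EuclideanSpace ℝ (Fin n) | s ≤ ‖y - c‖ ^ (-t)} ≤
        ENNReal.ofReal ((s ^ (-t⁻¹)) ^ (n : ℕ)) * ENNReal.ofReal v := by
    intro s hs
    rw [hμR, Measure.restrict_apply' measurableSet_ball]
    have hsub : {y : EuclideanSpace ℝ (Fin n) | s ≤ ‖y - c‖ ^ (-t)} ∩
        Metric.ball (0 : EuclideanSpace ℝ (Fin n)) R ⊆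
        Metric.closedBall c (s ^ (-t⁻¹)) := by
      rintro y ⟨hy1, -⟩
      simp only [mem_setOf_eq] at hy1
      simp only [Metric.mem_closedBall, dist_eq_norm]
      rcases eq_or_ne y c with rfl | hyc
      · simp only [sub_self, norm_zero]; positivity
      · have hb : 0 < ‖y - c‖ := by rwa [norm_pos_iff, sub_ne_zero]
        have h2 := Real.rpow_le_rpow_of_nonpos hs hy1 (neg_nonpos.mpr (inv_nonneg.mpr ht0.le))
        calc ‖y - c‖ = (‖y - c‖ ^ (-t)) ^ (-t⁻¹) := by
              rw [← Real.rpow_mul hb.le, show -t * -t⁻¹ = 1 by field_simp]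
              exact (Real.rpow_one _).symm
          _ ≤ s ^ (-t⁻¹) := h2
    refine le_trans (measure_mono hsub) (le_of_eq ?_)
    rw [Measure.addHaar_closedBall volume c (by positivity : (0:ℝ) ≤ s ^ (-t⁻¹)), hfr, hvE]
  have hcap : ∀ s : ℝ, μR {y : EuclideanSpace ℝ (Fin n) | s ≤ ‖y - c‖ ^ (-t)} ≤
      ENNReal.ofReal (R ^ (n : ℕ)) * ENNReal.ofReal v := by
    intro s
    rw [hμR, Measure.restrict_apply' measurableSet_ball]
    refine le_trans (measure_mono inter_subset_right) (le_of_eq ?_)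
    rw [Measure.addHaar_ball volume (0 : EuclideanSpace ℝ (Fin n)) hR.le, hfr, hvE]
  set T : ℝ := R ^ (-t) with hT
  have hT0 : 0 < T := by positivity
  calc ∫⁻ s in Ioi (0:ℝ), μR {y : EuclideanSpace ℝ (Fin n) | s ≤ ‖y - c‖ ^ (-t)}
      ≤ ∫⁻ s in Ioc (0:ℝ) T ∪ Ioi T, μR {y | s ≤ ‖y - c‖ ^ (-t)} :=
        lintegral_mono_set Ioi_subset_Ioc_union_Ioi
    _ ≤ (∫⁻ s in Ioc (0:ℝ) T, μR {y | s ≤ ‖y - c‖ ^ (-t)}) +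
        ∫⁻ s in Ioi T, μR {y | s ≤ ‖y - c‖ ^ (-t)} := lintegral_union_le _ _ _
    _ ≤ (ENNReal.ofReal (R ^ (n:ℕ)) * ENNReal.ofReal v) * ENNReal.ofReal T +
        ENNReal.ofReal v * ENNReal.ofReal (R ^ ((n:ℝ) - t) * (t / ((n:ℝ) - t))) := by
        gcongr
        · calc ∫⁻ s in Ioc (0:ℝ) T, μR {y | s ≤ ‖y - c‖ ^ (-t)}
              ≤ ∫⁻ _ in Ioc (0:ℝ) T, (ENNReal.ofReal (R ^ (n:ℕ)) * ENNReal.ofReal v) :=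
                setLIntegral_mono' measurableSet_Ioc fun s _ => hcap s
            _ = (ENNReal.ofReal (R ^ (n:ℕ)) * ENNReal.ofReal v) * volume (Ioc (0:ℝ) T) := by
                rw [setLIntegral_const]
            _ = _ := by rw [Real.volume_Ioc, sub_zero]
        · calc ∫⁻ s in Ioi T, μR {y | s ≤ ‖y - c‖ ^ (-t)}
              ≤ ∫⁻ s in Ioi T, ENNReal.ofReal (s ^ (-((n:ℝ)/t))) * ENNReal.ofReal v := by
                refine setLIntegral_mono' measurableSet_Ioi fun s hs => ?_
                have hs0 : 0 < s := lt_trans hT0 hs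
                refine le_trans (hball s hs0) ?_
                gcongr
                rw [← Real.rpow_natCast (s ^ (-t⁻¹)) n, ← Real.rpow_mul hs0.le]
                rw [show -t⁻¹ * (n:ℝ) = -((n:ℝ)/t) by field_simp]
            _ = (∫⁻ s in Ioi T, ENNReal.ofReal (s ^ (-((n:ℝ)/t)))) * ENNReal.ofReal v := by
                rw [lintegral_mul_const']; exact ENNReal.ofReal_ne_top
            _ ≤ ENNReal.ofReal v * ENNReal.ofReal (R ^ ((n:ℝ) - t) * (t / ((n:ℝ) - t))) := by
                rw [mul_comm]
                gcongr
                have hlt : -((n:ℝ)/t) < -1 := by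
                  rw [neg_lt_neg_iff, lt_div_iff₀ ht0]; linarith
                rw [← MeasureTheory.ofReal_integral_eq_lintegral_ofReal
                    (integrableOn_Ioi_rpow_of_lt hlt hT0)
                    (((ae_restrict_mem measurableSet_Ioi).mono
                      fun s hs => Real.rpow_nonneg (le_of_lt (hT0.trans hs)) _))]
                apply ENNReal.ofReal_le_ofReal
                rw [integral_Ioi_rpow_of_lt hlt hT0, hT, ← Real.rpow_mul hR.le,
                  show -t * (-((n:ℝ)/t) + 1) = (n:ℝ) - t by field_simp; ring]
                apply le_of_eq
                have hne : t ≠ 0 := ht0.ne'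
                have hne2 : (n:ℝ) - t ≠ 0 := hnt.ne'
                have hne3 : t - (n:ℝ) ≠ 0 := by intro h; apply hne2; linarith
                have h1 : -((n:ℝ)/t) + 1 = -(((n:ℝ)-t)/t) := by field_simp; ring
                rw [h1]
                field_simp
    _ ≤ ENNReal.ofReal ((v * (1 + t / ((n : ℝ) - t))) * R ^ ((n : ℝ) - t)) := by
        rw [← ENNReal.ofReal_mul (by positivity), ← ENNReal.ofReal_mul (by positivity),
          ← ENNReal.ofReal_mul (by positivity), ← ENNReal.ofReal_add (by positivity) (by positivity)]
        apply ENNReal.ofReal_le_ofReal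
        apply le_of_eq
        rw [hT, ← Real.rpow_natCast R n]
        rw [show R ^ ((n:ℝ)) * v * R ^ (-t) = v * (R ^ ((n:ℝ)) * R ^ (-t)) by ring,
          ← Real.rpow_add hR, show (n:ℝ) + -t = (n:ℝ) - t by ring]
        ring

lemma intB (n : ℕ) (hn3 : 3 ≤ n) :
    ∃ K : ℝ, 0 < K ∧ ∀ δ μ₁ : ℝ, 0 < δ → δ < 1 → 0 < μ₁ → μ₁ ≤ δ →
      ∫⁻ x in Metric.ball (0 : EuclideanSpace ℝ (Fin n)) (2 * δ),
        ENNReal.ofReal ((μ₁ + ‖x‖) ^ ((4 : ℝ) - n)) ≤ ENNReal.ofReal (K * δ ^ 4) := by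
  haveI : Nonempty (Fin n) := ⟨⟨0, by omega⟩⟩
  have hfr : (Module.finrank ℝ (EuclideanSpace ℝ (Fin n))) = n := finrank_euclideanSpace_fin
  rcases le_or_gt n 4 with h4 | h4
  · -- n ≤ 4 : integrand bounded by (3δ)^(4-n)
    set v : ℝ := (volume (Metric.ball (0 : EuclideanSpace ℝ (Fin n)) 1)).toReal with hv
    have hvlt : volume (Metric.ball (0 : EuclideanSpace ℝ (Fin n)) 1) < ⊤ := measure_ball_lt_top
    have hvE : volume (Metric.ball (0 : EuclideanSpace ℝ (Fin n)) 1) = ENNReal.ofReal v :=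
      (ENNReal.ofReal_toReal hvlt.ne).symm
    have hv0 : 0 < v := ENNReal.toReal_pos (measure_ball_pos volume 0 one_pos).ne' hvlt.ne
    refine ⟨3 ^ ((4:ℝ) - n) * 2 ^ (n:ℕ) * v, by positivity, fun δ μ₁ hδ hδ1 hμ₁ hμ₁δ => ?_⟩
    have he : (0:ℝ) ≤ (4:ℝ) - n := by
      have : (n:ℝ) ≤ 4 := by exact_mod_cast h4
      linarith
    calc ∫⁻ x in Metric.ball (0 : EuclideanSpace ℝ (Fin n)) (2 * δ),
          ENNReal.ofReal ((μ₁ + ‖x‖) ^ ((4 : ℝ) - n))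
        ≤ ∫⁻ _ in Metric.ball (0 : EuclideanSpace ℝ (Fin n)) (2 * δ),
          ENNReal.ofReal ((3 * δ) ^ ((4 : ℝ) - n)) := by
          refine setLIntegral_mono' measurableSet_ball fun x hx => ?_
          apply ENNReal.ofReal_le_ofReal
          apply Real.rpow_le_rpow (by positivity) _ he
          have := mem_ball_zero_iff.mp hx
          linarith
      _ = ENNReal.ofReal ((3 * δ) ^ ((4 : ℝ) - n)) *
            volume (Metric.ball (0 : EuclideanSpace ℝ (Fin n)) (2 * δ)) := setLIntegral_const _ _
      _ ≤ ENNReal.ofReal (3 ^ ((4:ℝ) - n) * 2 ^ (n:ℕ) * v * δ ^ 4) := by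
          rw [Measure.addHaar_ball volume _ (by positivity : (0:ℝ) ≤ 2 * δ), hfr, hvE,
            ← ENNReal.ofReal_mul (by positivity), ← ENNReal.ofReal_mul (by positivity)]
          apply ENNReal.ofReal_le_ofReal
          rw [Real.mul_rpow (by norm_num) hδ.le, mul_pow]
          have hδn4 : δ ^ ((4:ℝ) - n) * δ ^ (n:ℕ) = δ ^ (4:ℕ) := by
            rw [← Real.rpow_natCast δ n, ← Real.rpow_natCast δ 4, ← Real.rpow_add hδ]
            norm_num
          calc 3 ^ ((4:ℝ) - n) * δ ^ ((4:ℝ) - n) * (2 ^ n * δ ^ n * v)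
              = 3 ^ ((4:ℝ) - n) * 2 ^ n * v * (δ ^ ((4:ℝ) - n) * δ ^ (n:ℕ)) := by ring
            _ = 3 ^ ((4:ℝ) - n) * 2 ^ n * v * δ ^ (4:ℕ) := by rw [hδn4]
            _ ≤ _ := le_refl _
  · -- n > 4 : integrand a.e. bounded by ‖x‖^(-(n-4))
    have hn4 : (4:ℝ) < n := by exact_mod_cast h4
    obtain ⟨K, hK0, hK⟩ := rad8 n (by omega) ((n:ℝ) - 4) (by linarith) (by linarith)
    refine ⟨K * 16, by positivity, fun δ μ₁ hδ hδ1 hμ₁ hμ₁δ => ?_⟩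
    have h2δ : 0 < 2 * δ := by positivity
    calc ∫⁻ x in Metric.ball (0 : EuclideanSpace ℝ (Fin n)) (2 * δ),
          ENNReal.ofReal ((μ₁ + ‖x‖) ^ ((4 : ℝ) - n))
        ≤ ∫⁻ x in Metric.ball (0 : EuclideanSpace ℝ (Fin n)) (2 * δ),
          ENNReal.ofReal (‖x - 0‖ ^ (-((n:ℝ) - 4))) := by
          apply lintegral_mono_ae
          have h0 : ∀ᵐ x : EuclideanSpace ℝ (Fin n) ∂volume, x ≠ 0 := by
            haveI : Nontrivial (EuclideanSpace ℝ (Fin n)) := by infer_instance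
            rw [ae_iff]
            have hs : {x : EuclideanSpace ℝ (Fin n) | ¬ x ≠ 0} = {0} := by ext x; simp
            rw [hs]
            exact measure_singleton _
          filter_upwards [ae_restrict_of_ae h0] with x hx
          apply ENNReal.ofReal_le_ofReal
          rw [sub_zero, show -((n:ℝ) - 4) = (4:ℝ) - n by ring]
          have hx0 : 0 < ‖x‖ := norm_pos_iff.mpr hx
          apply Real.rpow_le_rpow_of_nonpos hx0 (by linarith [norm_nonneg x])
          linarith
      _ ≤ ENNReal.ofReal (K * (2 * δ) ^ ((n:ℝ) - ((n:ℝ) - 4))) := hK (2*δ) h2δ 0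
      _ ≤ ENNReal.ofReal (K * 16 * δ ^ 4) := by
          apply ENNReal.ofReal_le_ofReal
          rw [show (n:ℝ) - ((n:ℝ) - 4) = ((4:ℕ):ℝ) by norm_num, Real.rpow_natCast]
          apply le_of_eq
          ring

lemma intC (k n : ℕ) (hk : 1 ≤ k) (hn : 2 * k < n) :
    ∃ K : ℝ, 0 < K ∧ ∀ δ μ₁ μ₂ : ℝ, 0 < δ → δ < 1 → 0 < μ₁ → μ₁ ≤ δ → 0 < μ₂ →
      ∀ Θ : EuclideanSpace ℝ (Fin n),
      ∫⁻ x in Metric.ball (0 : EuclideanSpace ℝ (Fin n)) (2 * δ),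
        ENNReal.ofReal ((μ₁ + ‖x‖) ^ ((4:ℝ) - 2*k) *
          (μ₂^2 + ‖x - Θ‖^2) ^ (-(((n:ℝ) - 2*k)/2))) ≤ ENNReal.ofReal (K * δ ^ 4) := by
  haveI : Nonempty (Fin n) := ⟨⟨0, by omega⟩⟩
  haveI : Nontrivial (EuclideanSpace ℝ (Fin n)) := by infer_instance
  have hkn : (2:ℝ) * k < n := by exact_mod_cast hn
  have hk1 : (1:ℝ) ≤ k := by exact_mod_cast hk
  set a : ℝ := ((n:ℝ) - 2*k)/2 with ha
  have ha0 : 0 < a := by rw [ha]; linarith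
  have hane : ∀ᵐ x : EuclideanSpace ℝ (Fin n) ∂volume, x ≠ 0 := by
    rw [ae_iff]
    have hs : {x : EuclideanSpace ℝ (Fin n) | ¬ x ≠ 0} = {0} := by ext x; simp
    rw [hs]; exact measure_singleton _
  rcases le_or_gt k 2 with hk2 | hk2
  · -- k ≤ 2
    have he0 : (0:ℝ) ≤ (4:ℝ) - 2*k := by
      have : (k:ℝ) ≤ 2 := by exact_mod_cast hk2
      linarith
    obtain ⟨K, hK0, hK⟩ := rad8 n (by omega) ((n:ℝ) - 2*k) (by linarith) (by linarith)
    refine ⟨3 ^ ((4:ℝ) - 2*k) * 2 ^ (2*k : ℕ) * K, by positivity,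
      fun δ μ₁ μ₂ hδ hδ1 hμ₁ hμ₁δ hμ₂ Θ => ?_⟩
    have h2δ : 0 < 2*δ := by positivity
    have haeΘ : ∀ᵐ x : EuclideanSpace ℝ (Fin n) ∂volume, x ≠ Θ := by
      rw [ae_iff]
      have hs : {x : EuclideanSpace ℝ (Fin n) | ¬ x ≠ Θ} = {Θ} := by ext x; simp
      rw [hs]; exact measure_singleton _
    calc ∫⁻ x in Metric.ball (0 : EuclideanSpace ℝ (Fin n)) (2 * δ),
          ENNReal.ofReal ((μ₁ + ‖x‖) ^ ((4:ℝ) - 2*k) * (μ₂^2 + ‖x - Θ‖^2) ^ (-a))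
        ≤ ∫⁻ x in Metric.ball (0 : EuclideanSpace ℝ (Fin n)) (2 * δ),
          ENNReal.ofReal ((3*δ) ^ ((4:ℝ) - 2*k)) * ENNReal.ofReal (‖x - Θ‖ ^ (-((n:ℝ) - 2*k))) := by
          apply lintegral_mono_ae
          filter_upwards [ae_restrict_mem measurableSet_ball, ae_restrict_of_ae haeΘ]
            with x hx hxΘ
          rw [← ENNReal.ofReal_mul (by positivity)]
          apply ENNReal.ofReal_le_ofReal
          have hd0 : 0 < ‖x - Θ‖ := by rwa [norm_pos_iff, sub_ne_zero]
          have hb1 : (μ₁ + ‖x‖) ^ ((4:ℝ) - 2*k) ≤ (3*δ) ^ ((4:ℝ) - 2*k) := by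
            apply Real.rpow_le_rpow (by positivity) _ he0
            have := mem_ball_zero_iff.mp hx
            linarith
          have hb2 : (μ₂^2 + ‖x - Θ‖^2) ^ (-a) ≤ ‖x - Θ‖ ^ (-((n:ℝ) - 2*k)) := by
            have h1 : (μ₂^2 + ‖x - Θ‖^2) ^ (-a) ≤ (‖x - Θ‖^2) ^ (-a) :=
              Real.rpow_le_rpow_of_nonpos (by positivity) (by nlinarith) (by linarith)
            calc (μ₂^2 + ‖x - Θ‖^2) ^ (-a) ≤ (‖x - Θ‖^2) ^ (-a) := h1
              _ = ‖x - Θ‖ ^ (-((n:ℝ) - 2*k)) := by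
                  rw [← Real.rpow_natCast ‖x - Θ‖ 2, ← Real.rpow_mul (norm_nonneg _)]
                  congr 1
                  rw [ha]; push_cast; ring
          calc (μ₁ + ‖x‖) ^ ((4:ℝ) - 2*k) * (μ₂^2 + ‖x - Θ‖^2) ^ (-a)
              ≤ (3*δ) ^ ((4:ℝ) - 2*k) * (‖x - Θ‖ ^ (-((n:ℝ) - 2*k))) := by
                apply mul_le_mul hb1 hb2 (by positivity) (by positivity)
            _ = _ := rfl
      _ = ENNReal.ofReal ((3*δ) ^ ((4:ℝ) - 2*k)) *
          ∫⁻ x in Metric.ball (0 : EuclideanSpace ℝ (Fin n)) (2 * δ),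
            ENNReal.ofReal (‖x - Θ‖ ^ (-((n:ℝ) - 2*k))) := by
          rw [lintegral_const_mul']; exact ENNReal.ofReal_ne_top
      _ ≤ ENNReal.ofReal ((3*δ) ^ ((4:ℝ) - 2*k)) *
          ENNReal.ofReal (K * (2*δ) ^ ((n:ℝ) - ((n:ℝ) - 2*k))) := by
          gcongr
          exact hK (2*δ) h2δ Θ
      _ ≤ ENNReal.ofReal (3 ^ ((4:ℝ) - 2*k) * 2 ^ (2*k : ℕ) * K * δ ^ 4) := by
          rw [← ENNReal.ofReal_mul (by positivity)]
          apply ENNReal.ofReal_le_ofReal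
          rw [show (n:ℝ) - ((n:ℝ) - 2*k) = ((2*k : ℕ) : ℝ) by push_cast; ring,
            Real.rpow_natCast, Real.mul_rpow (by norm_num) hδ.le, mul_pow]
          have hδ4 : δ ^ ((4:ℝ) - 2*k) * δ ^ (2*k : ℕ) = δ ^ (4:ℕ) := by
            rw [← Real.rpow_natCast δ (2*k), ← Real.rpow_natCast δ 4, ← Real.rpow_add hδ]
            congr 1
            push_cast; ring
          calc 3 ^ ((4:ℝ) - 2*k) * δ ^ ((4:ℝ) - 2*k) * (K * (2 ^ (2*k:ℕ) * δ ^ (2*k:ℕ)))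
              = 3 ^ ((4:ℝ) - 2*k) * 2 ^ (2*k:ℕ) * K * (δ ^ ((4:ℝ) - 2*k) * δ ^ (2*k:ℕ)) := by
                ring
            _ = 3 ^ ((4:ℝ) - 2*k) * 2 ^ (2*k:ℕ) * K * δ ^ (4:ℕ) := by rw [hδ4]
            _ ≤ _ := le_refl _
  · -- k ≥ 3, so n ≥ 8 > 4
    have hn7 : (4:ℝ) < n := by
      have : (3:ℝ) ≤ k := by exact_mod_cast hk2
      linarith
    have he0 : (4:ℝ) - 2*k ≤ 0 := by
      have : (3:ℝ) ≤ k := by exact_mod_cast hk2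
      linarith
    obtain ⟨K, hK0, hK⟩ := rad8 n (by omega) ((n:ℝ) - 4) (by linarith) (by linarith)
    refine ⟨32 * K, by positivity, fun δ μ₁ μ₂ hδ hδ1 hμ₁ hμ₁δ hμ₂ Θ => ?_⟩
    have h2δ : 0 < 2*δ := by positivity
    have haeΘ : ∀ᵐ x : EuclideanSpace ℝ (Fin n) ∂volume, x ≠ Θ := by
      rw [ae_iff]
      have hs : {x : EuclideanSpace ℝ (Fin n) | ¬ x ≠ Θ} = {Θ} := by ext x; simp
      rw [hs]; exact measure_singleton _
    calc ∫⁻ x in Metric.ball (0 : EuclideanSpace ℝ (Fin n)) (2 * δ),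
          ENNReal.ofReal ((μ₁ + ‖x‖) ^ ((4:ℝ) - 2*k) * (μ₂^2 + ‖x - Θ‖^2) ^ (-a))
        ≤ ∫⁻ x in Metric.ball (0 : EuclideanSpace ℝ (Fin n)) (2 * δ),
          (ENNReal.ofReal (‖x - 0‖ ^ (-((n:ℝ) - 4))) +
           ENNReal.ofReal (‖x - Θ‖ ^ (-((n:ℝ) - 4)))) := by
          apply lintegral_mono_ae
          filter_upwards [ae_restrict_of_ae hane, ae_restrict_of_ae haeΘ] with x hx0 hxΘ
          rw [← ENNReal.ofReal_add (by positivity) (by positivity)]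
          apply ENNReal.ofReal_le_ofReal
          have hu0 : 0 < μ₁ + ‖x‖ := by positivity
          have hd0 : 0 < ‖x - Θ‖ := by rwa [norm_pos_iff, sub_ne_zero]
          have hx0' : 0 < ‖x‖ := norm_pos_iff.mpr hx0
          have hw0 : 0 < μ₂^2 + ‖x - Θ‖^2 := by positivity
          have hea : (4:ℝ) - 2*k + 2*(-a) = (4:ℝ) - n := by rw [ha]; ring
          rcases le_total ((μ₁ + ‖x‖)^2) (μ₂^2 + ‖x - Θ‖^2) with hcmp | hcmp
          · -- bounded by ‖x‖^(4-n)
            have h1 : (μ₂^2 + ‖x - Θ‖^2) ^ (-a) ≤ ((μ₁ + ‖x‖)^2) ^ (-a) :=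
              Real.rpow_le_rpow_of_nonpos (by positivity) hcmp (by linarith)
            have h2 : (μ₁ + ‖x‖) ^ ((4:ℝ) - 2*k) * (μ₂^2 + ‖x - Θ‖^2) ^ (-a) ≤
                (μ₁ + ‖x‖) ^ ((4:ℝ) - n) := by
              calc (μ₁ + ‖x‖) ^ ((4:ℝ) - 2*k) * (μ₂^2 + ‖x - Θ‖^2) ^ (-a)
                  ≤ (μ₁ + ‖x‖) ^ ((4:ℝ) - 2*k) * ((μ₁ + ‖x‖)^2) ^ (-a) := by
                    apply mul_le_mul_of_nonneg_left h1 (by positivity)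
                _ = (μ₁ + ‖x‖) ^ ((4:ℝ) - n) := by
                    rw [← Real.rpow_natCast (μ₁ + ‖x‖) 2, ← Real.rpow_mul hu0.le,
                      ← Real.rpow_add hu0]
                    rw [← hea]; norm_num
            have h3 : (μ₁ + ‖x‖) ^ ((4:ℝ) - n) ≤ ‖x - 0‖ ^ (-((n:ℝ) - 4)) := by
              rw [sub_zero, show -((n:ℝ) - 4) = (4:ℝ) - n by ring]
              exact Real.rpow_le_rpow_of_nonpos hx0' (by linarith [norm_nonneg x]) (by linarith)
            calc (μ₁ + ‖x‖) ^ ((4:ℝ) - 2*k) * (μ₂^2 + ‖x - Θ‖^2) ^ (-a)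
                ≤ ‖x - 0‖ ^ (-((n:ℝ) - 4)) := le_trans h2 h3
              _ ≤ _ := le_add_of_nonneg_right (by positivity)
          · -- bounded by ‖x-Θ‖^(4-n)
            have h1 : (μ₁ + ‖x‖) ^ ((4:ℝ) - 2*k) ≤
                (μ₂^2 + ‖x - Θ‖^2) ^ (((4:ℝ) - 2*k)/2) := by
              have : ((μ₁ + ‖x‖)^2) ^ (((4:ℝ) - 2*k)/2) ≤
                  (μ₂^2 + ‖x - Θ‖^2) ^ (((4:ℝ) - 2*k)/2) :=
                Real.rpow_le_rpow_of_nonpos hw0 hcmp (by linarith)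
              calc (μ₁ + ‖x‖) ^ ((4:ℝ) - 2*k)
                  = ((μ₁ + ‖x‖)^2) ^ (((4:ℝ) - 2*k)/2) := by
                    rw [← Real.rpow_natCast (μ₁ + ‖x‖) 2, ← Real.rpow_mul hu0.le]
                    congr 1
                    ring
                _ ≤ _ := this
            have h2 : (μ₁ + ‖x‖) ^ ((4:ℝ) - 2*k) * (μ₂^2 + ‖x - Θ‖^2) ^ (-a) ≤
                (μ₂^2 + ‖x - Θ‖^2) ^ (((4:ℝ) - n)/2) := by
              calc (μ₁ + ‖x‖) ^ ((4:ℝ) - 2*k) * (μ₂^2 + ‖x - Θ‖^2) ^ (-a)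
                  ≤ (μ₂^2 + ‖x - Θ‖^2) ^ (((4:ℝ) - 2*k)/2) * (μ₂^2 + ‖x - Θ‖^2) ^ (-a) := by
                    apply mul_le_mul_of_nonneg_right h1 (by positivity)
                _ = (μ₂^2 + ‖x - Θ‖^2) ^ (((4:ℝ) - n)/2) := by
                    rw [← Real.rpow_add hw0]
                    congr 1
                    rw [ha]; ring
            have h3 : (μ₂^2 + ‖x - Θ‖^2) ^ (((4:ℝ) - n)/2) ≤ ‖x - Θ‖ ^ (-((n:ℝ) - 4)) := by
              have h4 : (μ₂^2 + ‖x - Θ‖^2) ^ (((4:ℝ) - n)/2) ≤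
                  (‖x - Θ‖^2) ^ (((4:ℝ) - n)/2) :=
                Real.rpow_le_rpow_of_nonpos (by positivity) (by nlinarith) (by linarith)
              calc (μ₂^2 + ‖x - Θ‖^2) ^ (((4:ℝ) - n)/2) ≤ (‖x - Θ‖^2) ^ (((4:ℝ) - n)/2) := h4
                _ = ‖x - Θ‖ ^ (-((n:ℝ) - 4)) := by
                    rw [← Real.rpow_natCast ‖x - Θ‖ 2, ← Real.rpow_mul (norm_nonneg _)]
                    congr 1
                    ring
            calc (μ₁ + ‖x‖) ^ ((4:ℝ) - 2*k) * (μ₂^2 + ‖x - Θ‖^2) ^ (-a)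
                ≤ ‖x - Θ‖ ^ (-((n:ℝ) - 4)) := le_trans h2 h3
              _ ≤ _ := le_add_of_nonneg_left (by positivity)
      _ = (∫⁻ x in Metric.ball (0 : EuclideanSpace ℝ (Fin n)) (2 * δ),
            ENNReal.ofReal (‖x - 0‖ ^ (-((n:ℝ) - 4)))) +
          (∫⁻ x in Metric.ball (0 : EuclideanSpace ℝ (Fin n)) (2 * δ),
            ENNReal.ofReal (‖x - Θ‖ ^ (-((n:ℝ) - 4)))) := by
          apply lintegral_add_left
          fun_prop
      _ ≤ ENNReal.ofReal (K * (2*δ) ^ ((n:ℝ) - ((n:ℝ) - 4))) +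
          ENNReal.ofReal (K * (2*δ) ^ ((n:ℝ) - ((n:ℝ) - 4))) := by
          gcongr
          · exact hK (2*δ) h2δ 0
          · exact hK (2*δ) h2δ Θ
      _ ≤ ENNReal.ofReal (32 * K * δ ^ 4) := by
          rw [← ENNReal.ofReal_add (by positivity) (by positivity)]
          apply ENNReal.ofReal_le_ofReal
          rw [show (n:ℝ) - ((n:ℝ) - 4) = ((4:ℕ):ℝ) by norm_num, Real.rpow_natCast]
          apply le_of_eq
          ring

end Stmt8Aux

open Metric Set in
theorem stmt8 (k n : ℕ) (hk : 1 ≤ k) (hn : 2 * k < n) :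
    ∃ C : ℝ, 0 < C ∧
      ∀ δ μ₁ μ₂ : ℝ, 0 < δ → δ < 1 → 0 < μ₁ → μ₁ ≤ δ → 0 < μ₂ → μ₂ ≤ δ →
      ∀ Θ : EuclideanSpace ℝ (Fin n),
        ∫ x in Metric.ball (0 : EuclideanSpace ℝ (Fin n)) (2 * δ),
            μ₁ ^ (((n : ℝ) - 2 * k) / 2) * (μ₁ + ‖x‖) ^ ((4 : ℝ) - n) *
              (μ₂ ^ (((n : ℝ) - 2 * k) / 2) *
                (μ₂ ^ 2 + ‖x - Θ‖ ^ 2) ^ (((2 * k : ℝ) - n) / 2)) ≤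
          C * (μ₁ * μ₂ / (μ₁ ^ 2 + ‖Θ‖ ^ 2)) ^ (((n : ℝ) - 2 * k) / 2) *
            (μ₁ ^ 4 + δ ^ 4) := by
  have hkn : (2:ℝ) * k < n := by exact_mod_cast hn
  obtain ⟨KB, hKB0, hKB⟩ := Stmt8Aux.intB n (by omega)
  obtain ⟨KC, hKC0, hKC⟩ := Stmt8Aux.intC k n hk hn
  set a : ℝ := ((n:ℝ) - 2*k)/2 with ha
  have ha0 : 0 < a := by rw [ha]; linarith
  refine ⟨2 ^ (2*a) * (KC + KB), by positivity,
    fun δ μ₁ μ₂ hδ hδ1 hμ₁ hμ₁δ hμ₂ hμ₂δ Θ => ?_⟩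
  set s2 : ℝ := μ₁^2 + ‖Θ‖^2 with hs2
  have hs20 : 0 < s2 := by positivity
  set B := Metric.ball (0 : EuclideanSpace ℝ (Fin n)) (2 * δ) with hB
  set g : EuclideanSpace ℝ (Fin n) → ℝ :=
    fun x => (μ₁ + ‖x‖) ^ ((4:ℝ) - n) * (μ₂^2 + ‖x - Θ‖^2) ^ (-a) with hg
  -- rewrite the integrand
  have hrw : ∀ x : EuclideanSpace ℝ (Fin n),
      μ₁ ^ a * (μ₁ + ‖x‖) ^ ((4 : ℝ) - n) *
        (μ₂ ^ a * (μ₂ ^ 2 + ‖x - Θ‖ ^ 2) ^ (((2 * k : ℝ) - n) / 2)) =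
      (μ₁ ^ a * μ₂ ^ a) * g x := by
    intro x
    rw [hg, show ((2 * (k:ℝ)) - n) / 2 = -a by rw [ha]; ring]
    ring
  rw [show (∫ x in B,
      μ₁ ^ a * (μ₁ + ‖x‖) ^ ((4 : ℝ) - n) *
        (μ₂ ^ a * (μ₂ ^ 2 + ‖x - Θ‖ ^ 2) ^ (((2 * k : ℝ) - n) / 2))) =
      ∫ x in B, (μ₁ ^ a * μ₂ ^ a) * g x from integral_congr_ae
        (Filter.Eventually.of_forall fun x => hrw x), integral_const_mul]
  -- pointwise bound for g
  have hpw : ∀ x : EuclideanSpace ℝ (Fin n), g x ≤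
      s2 ^ (-a) * (2 ^ (2*a) *
        ((μ₁ + ‖x‖) ^ ((4:ℝ) - 2*k) * (μ₂^2 + ‖x - Θ‖^2) ^ (-a) +
         (μ₁ + ‖x‖) ^ ((4:ℝ) - n))) := by
    intro x
    have hu0 : 0 < μ₁ + ‖x‖ := by positivity
    have hw0 : 0 < μ₂^2 + ‖x - Θ‖^2 := by positivity
    have hsw : Real.sqrt s2 ≤ (μ₁ + ‖x‖) + Real.sqrt (μ₂^2 + ‖x - Θ‖^2) := by
      have h1 : Real.sqrt s2 ≤ μ₁ + ‖Θ‖ := by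
        rw [hs2]
        calc Real.sqrt (μ₁^2 + ‖Θ‖^2) ≤ Real.sqrt ((μ₁ + ‖Θ‖)^2) := by
              apply Real.sqrt_le_sqrt
              nlinarith [norm_nonneg Θ, hμ₁.le]
          _ = μ₁ + ‖Θ‖ := Real.sqrt_sq (by positivity)
      have h2 : ‖Θ‖ ≤ ‖x‖ + ‖x - Θ‖ := by
        calc ‖Θ‖ = ‖x - (x - Θ)‖ := by congr 1; abel
          _ ≤ ‖x‖ + ‖x - Θ‖ := norm_sub_le _ _
      have h3 : ‖x - Θ‖ ≤ Real.sqrt (μ₂^2 + ‖x - Θ‖^2) := by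
        calc ‖x - Θ‖ = Real.sqrt (‖x - Θ‖^2) := (Real.sqrt_sq (norm_nonneg _)).symm
          _ ≤ _ := Real.sqrt_le_sqrt (by nlinarith [sq_nonneg μ₂])
      linarith
    have hsq : ∀ b : ℝ, 0 ≤ b → (Real.sqrt b) ^ (2*a) = b ^ a := by
      intro b hb
      rw [Real.rpow_mul (Real.sqrt_nonneg b),
        show ((2:ℝ)) = ((2:ℕ):ℝ) by norm_num, Real.rpow_natCast, Real.sq_sqrt hb]
    have h2a : s2 ^ a ≤ 2 ^ (2*a) *
        ((μ₁ + ‖x‖) ^ (2*a) + (μ₂^2 + ‖x - Θ‖^2) ^ a) := by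
      have e1 : s2 ^ a = (Real.sqrt s2) ^ (2*a) := (hsq s2 hs20.le).symm
      have e2 : (Real.sqrt s2) ^ (2*a) ≤
          ((μ₁ + ‖x‖) + Real.sqrt (μ₂^2 + ‖x - Θ‖^2)) ^ (2*a) :=
        Real.rpow_le_rpow (Real.sqrt_nonneg _) hsw (by positivity)
      rcases le_total (μ₁ + ‖x‖) (Real.sqrt (μ₂^2 + ‖x - Θ‖^2)) with hc | hc
      · have e3 : ((μ₁ + ‖x‖) + Real.sqrt (μ₂^2 + ‖x - Θ‖^2)) ^ (2*a) ≤
            (2 * Real.sqrt (μ₂^2 + ‖x - Θ‖^2)) ^ (2*a) :=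
          Real.rpow_le_rpow (by positivity) (by linarith) (by positivity)
        rw [Real.mul_rpow (by norm_num) (Real.sqrt_nonneg _), hsq _ hw0.le] at e3
        rw [e1]
        refine le_trans (le_trans e2 e3) ?_
        have hnn : (0:ℝ) ≤ (μ₁ + ‖x‖) ^ (2*a) := by positivity
        have h2nn : (0:ℝ) ≤ (2:ℝ) ^ (2*a) := by positivity
        exact mul_le_mul_of_nonneg_left (le_add_of_nonneg_left hnn) h2nn
      · have e3 : ((μ₁ + ‖x‖) + Real.sqrt (μ₂^2 + ‖x - Θ‖^2)) ^ (2*a) ≤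
            (2 * (μ₁ + ‖x‖)) ^ (2*a) :=
          Real.rpow_le_rpow (by positivity) (by linarith) (by positivity)
        rw [Real.mul_rpow (by norm_num) hu0.le] at e3
        rw [e1]
        refine le_trans (le_trans e2 e3) ?_
        have h4 : (0:ℝ) ≤ (μ₂^2 + ‖x - Θ‖^2) ^ a := by positivity
        have h2nn : (0:ℝ) ≤ (2:ℝ) ^ (2*a) := by positivity
        exact mul_le_mul_of_nonneg_left (le_add_of_nonneg_right h4) h2nn
    -- multiply both sides
    have hmul : s2 ^ a * g x ≤ 2 ^ (2*a) *
        ((μ₁ + ‖x‖) ^ ((4:ℝ) - 2*k) * (μ₂^2 + ‖x - Θ‖^2) ^ (-a) +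
         (μ₁ + ‖x‖) ^ ((4:ℝ) - n)) := by
      have step : s2 ^ a * g x ≤
          (2 ^ (2*a) * ((μ₁ + ‖x‖) ^ (2*a) + (μ₂^2 + ‖x - Θ‖^2) ^ a)) * g x := by
        apply mul_le_mul_of_nonneg_right h2a
        rw [hg]; positivity
      refine le_trans step (le_of_eq ?_)
      rw [hg]
      have id1 : (μ₁ + ‖x‖) ^ (2*a) * (μ₁ + ‖x‖) ^ ((4:ℝ) - n) =
          (μ₁ + ‖x‖) ^ ((4:ℝ) - 2*k) := by
        rw [← Real.rpow_add hu0]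
        congr 1
        rw [ha]; ring
      have id2 : (μ₂^2 + ‖x - Θ‖^2) ^ a * (μ₂^2 + ‖x - Θ‖^2) ^ (-a) = 1 := by
        rw [← Real.rpow_add hw0, add_neg_cancel, Real.rpow_zero]
      calc (2 ^ (2*a) * ((μ₁ + ‖x‖) ^ (2*a) + (μ₂^2 + ‖x - Θ‖^2) ^ a)) *
            ((μ₁ + ‖x‖) ^ ((4:ℝ) - n) * (μ₂^2 + ‖x - Θ‖^2) ^ (-a))
          = 2 ^ (2*a) *
            (((μ₁ + ‖x‖) ^ (2*a) * (μ₁ + ‖x‖) ^ ((4:ℝ) - n)) * (μ₂^2 + ‖x - Θ‖^2) ^ (-a) +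
             ((μ₂^2 + ‖x - Θ‖^2) ^ a * (μ₂^2 + ‖x - Θ‖^2) ^ (-a)) *
               (μ₁ + ‖x‖) ^ ((4:ℝ) - n)) := by ring
        _ = _ := by rw [id1, id2, one_mul]
    have hfin : g x = s2 ^ (-a) * (s2 ^ a * g x) := by
      rw [← mul_assoc, ← Real.rpow_add hs20, neg_add_cancel, Real.rpow_zero, one_mul]
    rw [hfin]
    exact mul_le_mul_of_nonneg_left hmul (by positivity)
  -- convert to lintegral and bound
  have hg_nn : (0 : EuclideanSpace ℝ (Fin n) → ℝ) ≤ᵐ[volume.restrict B] g :=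
    Filter.Eventually.of_forall fun x => by rw [hg]; positivity
  have hg_m : AEStronglyMeasurable g (volume.restrict B) := by
    apply Measurable.aestronglyMeasurable
    rw [hg]; fun_prop
  rw [integral_eq_lintegral_of_nonneg_ae hg_nn hg_m]
  have key : ∫⁻ x in B, ENNReal.ofReal (g x) ≤
      ENNReal.ofReal (s2 ^ (-a) * 2 ^ (2*a) * ((KC + KB) * δ^4)) := by
    calc ∫⁻ x in B, ENNReal.ofReal (g x)
        ≤ ∫⁻ x in B, ENNReal.ofReal (s2 ^ (-a) * 2 ^ (2*a)) *
            (ENNReal.ofReal ((μ₁ + ‖x‖) ^ ((4:ℝ) - 2*k) * (μ₂^2 + ‖x - Θ‖^2) ^ (-a)) +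
             ENNReal.ofReal ((μ₁ + ‖x‖) ^ ((4:ℝ) - n))) := by
          apply lintegral_mono
          intro x
          dsimp only
          rw [← ENNReal.ofReal_add (by positivity) (by positivity),
            ← ENNReal.ofReal_mul (by positivity)]
          apply ENNReal.ofReal_le_ofReal
          refine le_trans (hpw x) (le_of_eq ?_)
          ring
      _ = ENNReal.ofReal (s2 ^ (-a) * 2 ^ (2*a)) *
          ((∫⁻ x in B, ENNReal.ofReal ((μ₁ + ‖x‖) ^ ((4:ℝ) - 2*k) *
              (μ₂^2 + ‖x - Θ‖^2) ^ (-a))) +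
           (∫⁻ x in B, ENNReal.ofReal ((μ₁ + ‖x‖) ^ ((4:ℝ) - n)))) := by
          rw [lintegral_const_mul' _ _ ENNReal.ofReal_ne_top, lintegral_add_left (by fun_prop)]
      _ ≤ ENNReal.ofReal (s2 ^ (-a) * 2 ^ (2*a)) *
          (ENNReal.ofReal (KC * δ^4) + ENNReal.ofReal (KB * δ^4)) := by
          gcongr
          · exact hKC δ μ₁ μ₂ hδ hδ1 hμ₁ hμ₁δ hμ₂ Θ
          · exact hKB δ μ₁ hδ hδ1 hμ₁ hμ₁δ
      _ = ENNReal.ofReal (s2 ^ (-a) * 2 ^ (2*a) * ((KC + KB) * δ^4)) := by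
          rw [← ENNReal.ofReal_add (by positivity) (by positivity),
            ← ENNReal.ofReal_mul (by positivity)]
          congr 1
          ring
  have hM : (∫⁻ x in B, ENNReal.ofReal (g x)).toReal ≤
      s2 ^ (-a) * 2 ^ (2*a) * ((KC + KB) * δ^4) :=
    ENNReal.toReal_le_of_le_ofReal (by positivity) key
  -- final arithmetic
  have hdiv : (μ₁ * μ₂ / s2) ^ a = μ₁ ^ a * μ₂ ^ a * s2 ^ (-a) := by
    rw [Real.div_rpow (by positivity) hs20.le, Real.mul_rpow hμ₁.le hμ₂.le,
      Real.rpow_neg hs20.le, div_eq_mul_inv]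
  calc μ₁ ^ a * μ₂ ^ a * (∫⁻ x in B, ENNReal.ofReal (g x)).toReal
      ≤ μ₁ ^ a * μ₂ ^ a * (s2 ^ (-a) * 2 ^ (2*a) * ((KC + KB) * δ^4)) := by
        apply mul_le_mul_of_nonneg_left hM (by positivity)
    _ = 2 ^ (2*a) * (KC + KB) * (μ₁ * μ₂ / s2) ^ a * δ^4 := by
        rw [hdiv]; ring
    _ ≤ 2 ^ (2*a) * (KC + KB) * (μ₁ * μ₂ / s2) ^ a * (μ₁^4 + δ^4) := by
        have h4 : (0:ℝ) ≤ μ₁^4 := by positivity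
        have hf : (0:ℝ) ≤ 2 ^ (2*a) * (KC + KB) * (μ₁ * μ₂ / s2) ^ a := by positivity
        exact mul_le_mul_of_nonneg_left (le_add_of_nonneg_left h4) hf
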